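/- Let F = (X; f₁,…,f_N) and G = (Y; g₁,…,g_N) be point-fibred IFSs on compact Hausdorff spaces X and Y with attractors A_F, A_G and coding maps π_F, π_G, let τ_F : A_F → Ω_F be a section of π_F, and let T_FG = π_G ∘ τ_F. If Ω_F is also an address space for G, and if for all σ, ω in the closure of Ω_F in I^∞ one has π_F(σ) = π_F(ω) if and only if π_G(σ) = π_G(ω), then T_FG : A_F → A_G is a homeomorphism, and T_GF = T_FG^{-1}, where T_GF = π_F ∘ τ_G with τ_G the section of π_G corresponding to the address space Ω_G := Ω_F. -/

import Mathlib

open Set Topology Filter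

/-- `seqComp f σ k` is the composition `f_{σ|k} = f_{σ₁} ∘ f_{σ₂} ∘ ⋯ ∘ f_{σ_k}`
(with the sequence `σ` indexed from `0`). -/
def seqComp {X : Type*} {N : ℕ} (f : Fin N → X → X) (σ : ℕ → Fin N) : ℕ → X → X
  | 0 => id
  | k + 1 => seqComp f σ k ∘ f (σ k)

/-- `PiMap f σ = ⋂_{k ≥ 1} f_{σ₁} ∘ ⋯ ∘ f_{σ_k}(X)`. -/
def PiMap {X : Type*} {N : ℕ} (f : Fin N → X → X) (σ : ℕ → Fin N) : Set X :=
  ⋂ k : ℕ, seqComp f σ (k + 1) '' Set.univ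

lemma seqComp_congr {X : Type*} {N : ℕ} (f : Fin N → X → X) {σ ω : ℕ → Fin N} :
    ∀ k, (∀ i < k, σ i = ω i) → seqComp f σ k = seqComp f ω k
  | 0, _ => rfl
  | k + 1, h => by
    simp only [seqComp, seqComp_congr f k fun i hi => h i (Nat.lt_succ_of_lt hi),
      h k (Nat.lt_succ_self k)]

lemma seqComp_continuous {X : Type*} [TopologicalSpace X] {N : ℕ} {f : Fin N → X → X}
    (hf : ∀ i, Continuous (f i)) (σ : ℕ → Fin N) : ∀ k, Continuous (seqComp f σ k)
  | 0 => continuous_id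
  | k + 1 => (seqComp_continuous hf σ k).comp (hf (σ k))

lemma seqComp_image_antitone {X : Type*} {N : ℕ} (f : Fin N → X → X) (σ : ℕ → Fin N) :
    Antitone fun k => seqComp f σ (k + 1) '' Set.univ := by
  apply antitone_nat_of_succ_le
  intro k
  calc seqComp f σ (k + 2) '' Set.univ
      = seqComp f σ (k + 1) '' (f (σ (k + 1)) '' Set.univ) := by
        rw [← Set.image_comp]; rfl
    _ ⊆ seqComp f σ (k + 1) '' Set.univ :=
        Set.image_mono (Set.subset_univ _)

/-- Continuity of the coding map of a point-fibred IFS. -/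
lemma piCode_continuous {X : Type*} [TopologicalSpace X] [CompactSpace X] [T2Space X]
    {N : ℕ} {f : Fin N → X → X} (hf : ∀ i, Continuous (f i)) {π : (ℕ → Fin N) → X}
    (hπ : ∀ σ, PiMap f σ = {π σ}) : Continuous π := by
  rw [continuous_iff_continuousAt]
  intro σ
  intro U hU
  obtain ⟨V, hVU, hVo, hVmem⟩ := mem_nhds_iff.mp hU
  -- find `k` such that `seqComp f σ (k+1) '' univ ⊆ V`
  have hcpt : ∀ k, IsCompact (seqComp f σ (k + 1) '' Set.univ) := fun k =>
    isCompact_univ.image (seqComp_continuous hf σ _)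
  have hcl : ∀ k, IsClosed (seqComp f σ (k + 1) '' Set.univ ∩ Vᶜ) := fun k =>
    ((hcpt k).isClosed).inter hVo.isClosed_compl
  have hempty : (Set.univ ∩ ⋂ k : ℕ, seqComp f σ (k + 1) '' Set.univ ∩ Vᶜ) = ∅ := by
    rw [Set.univ_inter, ← Set.iInter_inter, ← PiMap, hπ σ]
    simp only [Set.eq_empty_iff_forall_notMem, Set.mem_inter_iff, Set.mem_singleton_iff,
      Set.mem_compl_iff]
    rintro x ⟨rfl, hx⟩
    exact hx hVmem
  have hdir : Directed (· ⊇ ·) fun k : ℕ => seqComp f σ (k + 1) '' Set.univ ∩ Vᶜ := by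
    intro a b
    refine ⟨max a b, Set.inter_subset_inter_left _ ?_, Set.inter_subset_inter_left _ ?_⟩
    · exact seqComp_image_antitone f σ (le_max_left a b)
    · exact seqComp_image_antitone f σ (le_max_right a b)
  obtain ⟨k, hk⟩ := isCompact_univ.elim_directed_family_closed _ hcl hempty hdir
  rw [Set.univ_inter, ← Set.disjoint_iff_inter_eq_empty, Set.disjoint_compl_right_iff_subset]
    at hk
  -- the cylinder around `σ` of length `k+1` maps into `V`
  have hmem : {ω : ℕ → Fin N | ∀ i < k + 1, ω i = σ i} ∈ 𝓝 σ := by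
    have : {ω : ℕ → Fin N | ∀ i < k + 1, ω i = σ i}
        = ⋂ i ∈ Finset.range (k + 1), (fun ω : ℕ → Fin N => ω i) ⁻¹' {σ i} := by
      ext ω
      simp [Finset.mem_range]
    rw [this]
    exact (Filter.biInter_finset_mem _).mpr fun i _ =>
      (continuous_apply i).continuousAt.preimage_mem_nhds (by simp)
  rw [Filter.mem_map]
  filter_upwards [hmem] with ω hω
  apply hVU
  apply hk
  have hωmem : π ω ∈ PiMap f ω := by rw [hπ ω]; exact rfl
  have := Set.mem_iInter.mp hωmem k
  rwa [seqComp_congr f (k + 1) fun i hi => (hω i hi)] at this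

/-- Let `F`, `G` be point-fibred IFSs on compact Hausdorff spaces with
coding maps `π_F`, `π_G`, attractors `A_F = range π_F`, `A_G = range π_G`, and let
`τ_F : A_F → Ω_F` be a section of `π_F` with `T_FG = π_G ∘ τ_F`. If `Ω_F` is also an
address space for `G` (with section `τ_G` and `T_GF = π_F ∘ τ_G`), and for all `σ, ω`
in the closure of `Ω_F`, `π_F σ = π_F ω ↔ π_G σ = π_G ω`, then `T_FG` is a
homeomorphism and `T_GF = T_FG⁻¹`. -/
theorem fractalTransformation_isHomeomorph
    {X : Type*} [TopologicalSpace X] [CompactSpace X] [T2Space X] [Nonempty X]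
    {Y : Type*} [TopologicalSpace Y] [CompactSpace Y] [T2Space Y] [Nonempty Y]
    {N : ℕ} (f : Fin N → X → X) (hf : ∀ i, Continuous (f i))
    (g : Fin N → Y → Y) (hg : ∀ i, Continuous (g i))
    (πF : (ℕ → Fin N) → X) (hπF : ∀ σ, PiMap f σ = {πF σ})
    (πG : (ℕ → Fin N) → Y) (hπG : ∀ σ, PiMap g σ = {πG σ})
    -- `Ω_F` is an address space for `F` with section `τ_F`:
    (ΩF : Set (ℕ → Fin N)) (hΩF : πF '' ΩF = Set.range πF) (hinjF : Set.InjOn πF ΩF)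
    (τF : Set.range πF → ΩF) (hτF : ∀ x : Set.range πF, πF (τF x) = (x : X))
    -- `Ω_G := Ω_F` is also an address space for `G`, with section `τ_G`:
    (hΩG : πG '' ΩF = Set.range πG) (hinjG : Set.InjOn πG ΩF)
    (τG : Set.range πG → ΩF) (hτG : ∀ y : Set.range πG, πG (τG y) = (y : Y))
    -- the compatibility hypothesis on the closure of `Ω_F`:
    (hcomp : ∀ σ ∈ closure ΩF, ∀ ω ∈ closure ΩF, (πF σ = πF ω ↔ πG σ = πG ω)) :
    IsHomeomorph (fun x : Set.range πF =>
        (⟨πG (τF x), Set.mem_range_self ((τF x : ℕ → Fin N))⟩ : Set.range πG)) ∧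
      (∀ x : Set.range πF,
        (⟨πF (τG ⟨πG (τF x), Set.mem_range_self ((τF x : ℕ → Fin N))⟩),
          Set.mem_range_self _⟩ : Set.range πF) = x) ∧
      (∀ y : Set.range πG,
        (⟨πG (τF ⟨πF (τG y), Set.mem_range_self ((τG y : ℕ → Fin N))⟩),
          Set.mem_range_self _⟩ : Set.range πG) = y) := by
  have hπFc : Continuous πF := piCode_continuous hf hπF
  have hπGc : Continuous πG := piCode_continuous hg hπG
  set T : Set.range πF → Set.range πG := fun x =>
    ⟨πG (τF x), Set.mem_range_self ((τF x : ℕ → Fin N))⟩ with hT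
  set S : Set.range πG → Set.range πF := fun y =>
    ⟨πF (τG y), Set.mem_range_self ((τG y : ℕ → Fin N))⟩ with hS
  -- key compatibility consequences (elements of ΩF are in its closure)
  have key : ∀ σ ∈ ΩF, ∀ ω ∈ ΩF, (πF σ = πF ω ↔ πG σ = πG ω) := fun σ hσ ω hω =>
    hcomp σ (subset_closure hσ) ω (subset_closure hω)
  -- the two inverse identities
  have hST : ∀ x : Set.range πF, S (T x) = x := by
    intro x
    apply Subtype.ext
    show πF (τG (T x)) = (x : X)
    rw [← hτF x]
    exact (key _ (τG (T x)).2 _ (τF x).2).mpr (by rw [hτG (T x)])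
  have hTS : ∀ y : Set.range πG, T (S y) = y := by
    intro y
    apply Subtype.ext
    show πG (τF (S y)) = (y : Y)
    rw [← hτG y]
    exact (key _ (τF (S y)).2 _ (τG y).2).mp (by rw [hτF (S y)])
  -- continuity of T via the quotient map from the closure of ΩF
  haveI : CompactSpace (Set.range πF) :=
    isCompact_iff_compactSpace.mp (isCompact_range hπFc)
  have hTcont : Continuous T := by
    haveI : CompactSpace (closure ΩF) :=
      isCompact_iff_compactSpace.mp isClosed_closure.isCompact
    set q : closure ΩF → Set.range πF := fun σ => ⟨πF σ, Set.mem_range_self _⟩ with hq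
    have hqc : Continuous q := Continuous.subtype_mk (hπFc.comp continuous_subtype_val) _
    have hqs : Function.Surjective q := by
      rintro ⟨x, ρ, rfl⟩
      have : πF ρ ∈ πF '' ΩF := by rw [hΩF]; exact Set.mem_range_self ρ
      obtain ⟨σ, hσ, hσx⟩ := this
      exact ⟨⟨σ, subset_closure hσ⟩, Subtype.ext hσx⟩
    have hquot : IsQuotientMap q := IsQuotientMap.of_surjective_continuous hqs hqc
    rw [hquot.continuous_iff]
    have : T ∘ q = fun σ : closure ΩF => ⟨πG σ, Set.mem_range_self _⟩ := by
      funext σ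
      apply Subtype.ext
      show πG (τF (q σ)) = πG σ
      refine (hcomp _ (subset_closure (τF (q σ)).2) _ σ.2).mp ?_
      rw [hτF (q σ)]
    rw [this]
    exact Continuous.subtype_mk (hπGc.comp continuous_subtype_val) _
  -- T is a continuous bijection from a compact space to a Hausdorff space
  have hbij : Function.Bijective T := by
    constructor
    · intro a b hab
      rw [← hST a, ← hST b, hab]
    · intro y
      exact ⟨S y, hTS y⟩
  exact ⟨isHomeomorph_iff_continuous_bijective.mpr ⟨hTcont, hbij⟩, hST, hTS⟩
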